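/- Let β ∈ (0,1) and suppose L(w,r) is convex in w for each fixed r, L(w,·) is measurable and μ-integrable for every w, and Φ(w,·) is continuous for every w. Then w ↦ φ_β(w) = CVaR_β(w) is a convex function on ℝⁿ. -/

import Mathlib

open MeasureTheory

/-- For `β ∈ (0,1)`, if `L (·, r)` is convex in `w` for each fixed `r`, `L w` is
measurable and integrable for every `w`, and `Φ(w,·)` is continuous for every `w`, then
`w ↦ φ_β(w) = CVaR_β(w) = min_α F_β(w,α)` is convex on `ℝⁿ`. -/
theorem stmt_8 {n : ℕ} (μ : Measure (Fin n → ℝ)) [IsProbabilityMeasure μ]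
    (L : (Fin n → ℝ) → (Fin n → ℝ) → ℝ) (β : ℝ)
    (hβ : β ∈ Set.Ioo (0 : ℝ) 1)
    (hconv : ∀ r : Fin n → ℝ, ConvexOn ℝ Set.univ (fun w : Fin n → ℝ => L w r))
    (hmeas : ∀ w : Fin n → ℝ, Measurable (L w))
    (hint : ∀ w : Fin n → ℝ, Integrable (L w) μ)
    (hcont : ∀ w : Fin n → ℝ,
      Continuous (fun α : ℝ => (μ {r | L w r ≤ α}).toReal)) :
    ConvexOn ℝ (Set.univ : Set (Fin n → ℝ))
      (fun w : Fin n → ℝ =>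
        ⨅ α : ℝ, (α + (1 - β)⁻¹ * ∫ r, max (L w r - α) 0 ∂μ)) := by
  obtain ⟨hβ0, hβ1⟩ := hβ
  set c : ℝ := (1 - β)⁻¹ with hc
  have hc0 : 0 < c := inv_pos.mpr (by linarith)
  have hc1 : 1 ≤ c := by
    rw [hc, le_inv_comm₀ one_pos (by linarith)]
    simp; linarith
  set F : (Fin n → ℝ) → ℝ → ℝ :=
    fun w α => α + c * ∫ r, max (L w r - α) 0 ∂μ with hF
  have hintm : ∀ w α, Integrable (fun r => max (L w r - α) 0) μ :=
    fun w α => ((hint w).sub (integrable_const α)).pos_part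
  -- lower bound : F w α ≥ ∫ L w
  have hlb : ∀ w α, (∫ r, L w r ∂μ) ≤ F w α := by
    intro w α
    have hnn : 0 ≤ ∫ r, max (L w r - α) 0 ∂μ :=
      integral_nonneg fun r => le_max_right _ _
    rcases le_total (∫ r, L w r ∂μ) α with h | h
    · have : 0 ≤ c * ∫ r, max (L w r - α) 0 ∂μ := by positivity
      simp only [hF]; linarith
    · have h1 : (∫ r, L w r ∂μ) - α ≤ ∫ r, max (L w r - α) 0 ∂μ := by
        have := integral_mono (f := fun r => L w r - α)
          (g := fun r => max (L w r - α) 0) ((hint w).sub (integrable_const α))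
          (hintm w α) (fun r => le_max_left _ _)
        rwa [integral_sub (hint w) (integrable_const α), integral_const,
          probReal_univ, smul_eq_mul, one_mul] at this
      have h2 : 1 * ((∫ r, L w r ∂μ) - α) ≤ c * ∫ r, max (L w r - α) 0 ∂μ :=
        mul_le_mul hc1 h1 (by linarith) (le_of_lt hc0)
      simp only [hF]; linarith
  have hbdd : ∀ w, BddBelow (Set.range fun α => F w α) :=
    fun w => ⟨∫ r, L w r ∂μ, by rintro x ⟨α, rfl⟩; exact hlb w α⟩
  refine ⟨convex_univ, ?_⟩
  rintro w₁ - w₂ - a b ha hb hab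
  -- joint convexity of F
  have hFconv : ∀ α₁ α₂, F (a • w₁ + b • w₂) (a * α₁ + b * α₂)
      ≤ a * F w₁ α₁ + b * F w₂ α₂ := by
    intro α₁ α₂
    have hptwise : ∀ r, max (L (a • w₁ + b • w₂) r - (a * α₁ + b * α₂)) 0
        ≤ a * max (L w₁ r - α₁) 0 + b * max (L w₂ r - α₂) 0 := by
      intro r
      have hL := (hconv r).2 (Set.mem_univ w₁) (Set.mem_univ w₂) ha hb hab
      simp only [smul_eq_mul] at hL
      have h1 : L (a • w₁ + b • w₂) r - (a * α₁ + b * α₂)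
          ≤ a * (L w₁ r - α₁) + b * (L w₂ r - α₂) := by ring_nf; linarith
      have h2 : a * (L w₁ r - α₁) ≤ a * max (L w₁ r - α₁) 0 :=
        mul_le_mul_of_nonneg_left (le_max_left _ _) ha
      have h3 : b * (L w₂ r - α₂) ≤ b * max (L w₂ r - α₂) 0 :=
        mul_le_mul_of_nonneg_left (le_max_left _ _) hb
      have h4 : 0 ≤ a * max (L w₁ r - α₁) 0 + b * max (L w₂ r - α₂) 0 := by
        have := le_max_right (L w₁ r - α₁) 0
        have := le_max_right (L w₂ r - α₂) 0
        positivity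
      exact max_le (by linarith) h4
    have hInt : (∫ r, max (L (a • w₁ + b • w₂) r - (a * α₁ + b * α₂)) 0 ∂μ)
        ≤ ∫ r, (a * max (L w₁ r - α₁) 0 + b * max (L w₂ r - α₂) 0) ∂μ :=
      integral_mono (hintm _ _)
        (((hintm w₁ α₁).const_mul a).add ((hintm w₂ α₂).const_mul b)) hptwise
    rw [integral_add ((hintm w₁ α₁).const_mul a) ((hintm w₂ α₂).const_mul b),
      integral_const_mul, integral_const_mul] at hInt
    simp only [hF]
    nlinarith [hc0.le]
  -- conclude convexity of the infimum
  simp only [smul_eq_mul]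
  refine le_of_forall_pos_le_add ?_
  intro ε hε
  have h₁ : ∃ α₁, F w₁ α₁ < (⨅ α, F w₁ α) + ε / 2 :=
    exists_lt_of_ciInf_lt (by linarith [lt_add_of_pos_right (⨅ α, F w₁ α) (half_pos hε)])
  have h₂ : ∃ α₂, F w₂ α₂ < (⨅ α, F w₂ α) + ε / 2 :=
    exists_lt_of_ciInf_lt (by linarith [lt_add_of_pos_right (⨅ α, F w₂ α) (half_pos hε)])
  obtain ⟨α₁, hα₁⟩ := h₁
  obtain ⟨α₂, hα₂⟩ := h₂
  have key : (⨅ α, F (a • w₁ + b • w₂) α) ≤ F (a • w₁ + b • w₂) (a * α₁ + b * α₂) :=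
    ciInf_le (hbdd _) _
  have ha1 : a ≤ 1 := by linarith
  have hb1 : b ≤ 1 := by linarith
  have e1 : a * F w₁ α₁ ≤ a * ((⨅ α, F w₁ α) + ε / 2) :=
    mul_le_mul_of_nonneg_left hα₁.le ha
  have e2 : b * F w₂ α₂ ≤ b * ((⨅ α, F w₂ α) + ε / 2) :=
    mul_le_mul_of_nonneg_left hα₂.le hb
  calc (⨅ α, F (a • w₁ + b • w₂) α)
      ≤ a * F w₁ α₁ + b * F w₂ α₂ := key.trans (hFconv α₁ α₂)
    _ ≤ a * ((⨅ α, F w₁ α) + ε / 2) + b * ((⨅ α, F w₂ α) + ε / 2) := by linarith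
    _ = a * (⨅ α, F w₁ α) + b * (⨅ α, F w₂ α) + (a + b) * (ε / 2) := by ring
    _ ≤ a • (⨅ α, F w₁ α) + b • (⨅ α, F w₂ α) + ε := by
        simp only [smul_eq_mul, hab]; linarith
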